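/- The class of finite groups has the amalgamation property: if A, B, C are finite groups and f : A → B and g : A → C are injective group homomorphisms, then there exist a finite group D and injective group homomorphisms r : B → D and s : C → D such that r ∘ f = s ∘ g. -/

import Mathlib

noncomputable def cosetEquiv {A B : Type} [Group A] [Group B] (f : A →* B)
    (hf : Function.Injective f) : B ≃ (B ⧸ f.range) × A where
  toFun b := (QuotientGroup.mk b,
    (MonoidHom.ofInjective hf).symm
      ⟨((QuotientGroup.mk b : B ⧸ f.range).out)⁻¹ * b, by
        rw [← QuotientGroup.eq]; exact QuotientGroup.out_eq' _⟩)
  invFun p := p.1.out * f p.2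
  left_inv b := by
    have key : ∀ x : f.range, f ((MonoidHom.ofInjective hf).symm x) = x := fun x => by
      simpa using congrArg Subtype.val ((MonoidHom.ofInjective hf).apply_symm_apply x)
    simp only [key]
    group
  right_inv p := by
    obtain ⟨u, a⟩ := p
    have h1 : (QuotientGroup.mk (u.out * f a) : B ⧸ f.range) = u := by
      rw [QuotientGroup.mk_mul_of_mem _ (show f a ∈ f.range from ⟨a, rfl⟩)]
      exact QuotientGroup.out_eq' u
    simp only [h1]
    congr 1
    have h2 : (u.out)⁻¹ * (u.out * f a) = f a := by group
    rw [MulEquiv.symm_apply_eq]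
    ext
    simp [h2, MonoidHom.ofInjective_apply]

theorem cosetEquiv_symm_apply {A B : Type} [Group A] [Group B] (f : A →* B)
    (hf : Function.Injective f) (u : B ⧸ f.range) (a : A) :
    (cosetEquiv f hf).symm (u, a) = u.out * f a := rfl

theorem cosetEquiv_mul {A B : Type} [Group A] [Group B] (f : A →* B)
    (hf : Function.Injective f) (b : B) (a : A) :
    cosetEquiv f hf (b * f a) = ((cosetEquiv f hf b).1, (cosetEquiv f hf b).2 * a) := by
  apply (cosetEquiv f hf).symm.injective
  rw [Equiv.symm_apply_apply, cosetEquiv_symm_apply, map_mul, ← mul_assoc,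
    ← cosetEquiv_symm_apply f hf (cosetEquiv f hf b).1,
    Prod.mk.eta, Equiv.symm_apply_apply]

/-- the right-regular action crossed with identity -/
def rightReg (Q G : Type) [Group G] : G →* Equiv.Perm (Q × G) :=
  MonoidHom.mk' (fun g => Equiv.prodCongr (Equiv.refl Q) (Equiv.mulRight g⁻¹))
    (by intro a b; ext x <;> simp [mul_assoc])

theorem rightReg_injective (Q G : Type) [Group G] [Nonempty Q] :
    Function.Injective (rightReg Q G) := by
  intro a b h
  obtain ⟨q⟩ := ‹Nonempty Q›
  have := congrArg (fun p : Equiv.Perm (Q × G) => (p (q, 1)).2) h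
  simpa [rightReg] using this

theorem rightReg_apply (Q G : Type) [Group G] (g : G) (q : Q) (x : G) :
    rightReg Q G g (q, x) = (q, x * g⁻¹) := rfl

/-- **Amalgamation property for the class of finite groups.**
If `A, B, C` are finite groups and `f : A → B`, `g : A → C` are injective group
homomorphisms (embeddings), then there exist a finite group `D` and injective group
homomorphisms `r : B → D`, `s : C → D` such that `r ∘ f = s ∘ g`. -/
theorem finiteGroups_amalgamation
    (A B C : Type) [Group A] [Group B] [Group C] [Finite A] [Finite B] [Finite C]
    (f : A →* B) (g : A →* C)
    (hf : Function.Injective f) (hg : Function.Injective g) :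
    ∃ (D : Type) (_ : Group D) (_ : Finite D) (r : B →* D) (s : C →* D),
      Function.Injective r ∧ Function.Injective s ∧ r.comp f = s.comp g := by
  classical
  set H := f.range with hH
  set K := g.range with hK
  let X := (C ⧸ K) × B
  let shuffle : (C ⧸ K) × ((B ⧸ H) × A) ≃ (B ⧸ H) × ((C ⧸ K) × A) :=
    ⟨fun x => (x.2.1, x.1, x.2.2), fun x => (x.2.1, x.1, x.2.2),
     fun _ => rfl, fun _ => rfl⟩
  let ψ : X ≃ (B ⧸ H) × C :=
    ((Equiv.refl (C ⧸ K)).prodCongr (cosetEquiv f hf)).trans <|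
      shuffle.trans ((Equiv.refl (B ⧸ H)).prodCongr (cosetEquiv g hg).symm)
  have ψ_apply : ∀ v b, ψ (v, b) =
      ((cosetEquiv f hf b).1, (cosetEquiv g hg).symm (v, (cosetEquiv f hf b).2)) := by
    intro v b; rfl
  refine ⟨Equiv.Perm X, inferInstance, inferInstance, rightReg (C ⧸ K) B,
    MonoidHom.mk' (fun c => (ψ.symm.permCongr) (rightReg (B ⧸ H) C c))
      (by intro a b; ext x <;> simp [Equiv.permCongr, Equiv.equivCongr, map_mul,
            Equiv.Perm.mul_apply]),
    rightReg_injective _ _, ?_, ?_⟩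
  · intro a b h
    simp only [MonoidHom.mk'_apply] at h
    exact rightReg_injective _ _ (ψ.symm.permCongr.injective h)
  · refine MonoidHom.ext fun a => Equiv.ext fun x => ?_
    obtain ⟨v, b⟩ := x
    have key : ψ (v, b * (f a)⁻¹) = rightReg (B ⧸ H) C (g a) (ψ (v, b)) := by
      rw [ψ_apply, ψ_apply, ← map_inv f, cosetEquiv_mul, rightReg_apply]
      simp [cosetEquiv_symm_apply, map_mul, map_inv, mul_assoc]
    simp only [MonoidHom.comp_apply, MonoidHom.mk'_apply, Equiv.permCongr_apply,
      Equiv.symm_symm, rightReg_apply]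
    rw [← key, Equiv.symm_apply_apply]
    rfl
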